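/- In U(O), for all k,u ∈ ℤ≥0 and j,l ∈ ℕ+: [D^{Γ,+}_{u,1}(j,l), D^{Γ,-}_{k,1}(j,l)] = p^Γ_{k+u+1}(j,l), where p^Γ_s(j,l) := [x_j^{Γ,+}, D^{Γ,-}_{s−1,1}(j,l)]. -/

import Mathlib

open Finset

noncomputable section

/- Setting: `A` plays the role of the universal enveloping algebra `U(O)` of the
Onsager algebra.  `X m = x_m^{Γ,+}`, `Y m = x_m^{Γ,-}`, `H m = h_m^Γ` (indexed by `ℤ`
via the conventions `x_{-m}^{Γ,±} = -x_m^{Γ,±}`, `x_0^{Γ,±} = 0`, `h_{-m}^Γ = h_m^Γ`),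
and the Lie brackets of `O` are imposed as commutator relations. -/
variable {A : Type*} [Ring A] [Algebra ℂ A]

/-- `Λ^Γ_{j,l,1} = -(h^Γ_{j+l} - h^Γ_{j-l})`. -/
def Lam1 (H : ℤ → A) (j l : ℤ) : A := -(H (j + l) - H (j - l))

/-- `D^{Γ,+}_{u,1}(j,l)`. -/
def Dp (X H : ℤ → A) (j l : ℤ) : ℕ → A
  | 0 => X j
  | u + 1 => ((1 : ℂ) / 2) • ⁅Dp X H j l u, Lam1 H j l⁆

/-- `D^{Γ,-}_{u,1}(j,l)`. -/
def Dm (Y H : ℤ → A) (j l : ℤ) : ℕ → A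
  | 0 => Y l
  | u + 1 => (-((1 : ℂ) / 2)) • ⁅Dm Y H j l u, Lam1 H j l⁆

/-- `p^Γ_s(j,l) = [x_j^{Γ,+}, D^{Γ,-}_{s-1,1}(j,l)]`. -/
def pG (X Y H : ℤ → A) (j l : ℤ) (s : ℕ) : A := ⁅X j, Dm Y H j l (s - 1)⁆

/-- `Λ^Γ_{j,l,n}`, via the recursion `n Λ_n = -∑_{i=1}^n p_i Λ_{n-i}` equivalent to the
exponential generating series definition. -/
def Lam (X Y H : ℤ → A) (j l : ℤ) : ℕ → A
  | 0 => 1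
  | n + 1 =>
      (-(((n : ℂ) + 1)⁻¹)) •
        ∑ i ∈ Finset.range (n + 1), pG X Y H j l (i + 1) * Lam X Y H j l (n - i)
  decreasing_by omega

/-- `D^{Γ,+}_{u,v}(j,l)`. -/
def DvP (X H : ℤ → A) (j l : ℤ) : ℕ → ℕ → A
  | u, 0 => if u = 0 then 1 else 0
  | u, v + 1 =>
      (((v : ℂ) + 1)⁻¹) • ∑ i ∈ Finset.range (u + 1), Dp X H j l i * DvP X H j l (u - i) v

/-- `D^{Γ,-}_{u,v}(j,l)`. -/
def DvM (Y H : ℤ → A) (j l : ℤ) : ℕ → ℕ → A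
  | u, 0 => if u = 0 then 1 else 0
  | u, v + 1 =>
      (((v : ℂ) + 1)⁻¹) • ∑ i ∈ Finset.range (u + 1), Dm Y H j l i * DvM Y H j l (u - i) v

section

attribute [local instance 100] LieRing.ofAssociativeRing

lemma aux_lie_lam_mem (Y H : ℤ → A)
    (hHY : ∀ k l : ℤ, ⁅H k, Y l⁆ = -(2 • (Y (l + k) + Y (l - k))))
    (j l : ℤ) (a : A) (ha : a ∈ Submodule.span ℂ (Set.range Y)) :
    ⁅a, Lam1 H j l⁆ ∈ Submodule.span ℂ (Set.range Y) := by
  induction ha using Submodule.span_induction with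
  | mem x hx =>
    obtain ⟨m, rfl⟩ := hx
    have h1 : ⁅Y m, Lam1 H j l⁆ = ⁅H (j + l), Y m⁆ - ⁅H (j - l), Y m⁆ := by
      rw [Lam1, lie_neg, lie_sub, ← lie_skew (Y m), ← lie_skew (Y m)]
      abel
    rw [h1, hHY, hHY]
    refine sub_mem ?_ ?_ <;>
      exact neg_mem (nsmul_mem (add_mem (Submodule.subset_span (Set.mem_range_self _))
        (Submodule.subset_span (Set.mem_range_self _))) 2)
  | zero => simp
  | add x y _ _ hx hy => rw [add_lie]; exact add_mem hx hy
  | smul c x _ hx => rw [smul_lie]; exact Submodule.smul_mem _ _ hx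

lemma aux_Dm_mem (Y H : ℤ → A)
    (hHY : ∀ k l : ℤ, ⁅H k, Y l⁆ = -(2 • (Y (l + k) + Y (l - k))))
    (j l : ℤ) (s : ℕ) :
    Dm Y H j l s ∈ Submodule.span ℂ (Set.range Y) := by
  induction s with
  | zero => exact Submodule.subset_span ⟨l, rfl⟩
  | succ s ih =>
    rw [Dm]
    exact Submodule.smul_mem _ _ (aux_lie_lam_mem Y H hHY j l _ ih)

lemma aux_lie_X_mem (X Y H : ℤ → A)
    (hXY : ∀ j l : ℤ, ⁅X j, Y l⁆ = H (j + l) - H (j - l))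
    (j : ℤ) (a : A) (ha : a ∈ Submodule.span ℂ (Set.range Y)) :
    ⁅X j, a⁆ ∈ Submodule.span ℂ (Set.range H) := by
  induction ha using Submodule.span_induction with
  | mem x hx =>
    obtain ⟨m, rfl⟩ := hx
    rw [hXY]
    exact sub_mem (Submodule.subset_span (Set.mem_range_self _))
      (Submodule.subset_span (Set.mem_range_self _))
  | zero => simp
  | add x y _ _ hx hy => rw [lie_add]; exact add_mem hx hy
  | smul c x _ hx => rw [lie_smul]; exact Submodule.smul_mem _ _ hx

lemma aux_lie_H_lam (H : ℤ → A)
    (hHH : ∀ k m : ℤ, ⁅H k, H m⁆ = 0)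
    (j l : ℤ) (a : A) (ha : a ∈ Submodule.span ℂ (Set.range H)) :
    ⁅a, Lam1 H j l⁆ = 0 := by
  induction ha using Submodule.span_induction with
  | mem x hx =>
    obtain ⟨m, rfl⟩ := hx
    rw [Lam1, lie_neg, lie_sub, hHH, hHH]
    simp
  | zero => simp
  | add x y _ _ hx hy => rw [add_lie, hx, hy, add_zero]
  | smul c x _ hx => rw [smul_lie, hx, smul_zero]

end

/-- `[D^{Γ,+}_{u,1}(j,l), D^{Γ,-}_{k,1}(j,l)] = p^Γ_{k+u+1}(j,l)`. -/
theorem bracket_Dp_Dm (X Y H : ℤ → A)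
    (hXneg : ∀ m : ℤ, X (-m) = -X m) (hX0 : X 0 = 0)
    (hYneg : ∀ m : ℤ, Y (-m) = -Y m) (hY0 : Y 0 = 0)
    (hHneg : ∀ m : ℤ, H (-m) = H m)
    (hXY : ∀ j l : ℤ, ⁅X j, Y l⁆ = H (j + l) - H (j - l))
    (hHX : ∀ k j : ℤ, ⁅H k, X j⁆ = 2 • (X (j + k) - X (k - j)))
    (hHY : ∀ k l : ℤ, ⁅H k, Y l⁆ = -(2 • (Y (l + k) + Y (l - k))))
    (hHH : ∀ k m : ℤ, ⁅H k, H m⁆ = 0)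
    (k u : ℕ) (j l : ℕ+) :
    ⁅Dp X H ((j : ℕ) : ℤ) ((l : ℕ) : ℤ) u, Dm Y H ((j : ℕ) : ℤ) ((l : ℕ) : ℤ) k⁆ =
      pG X Y H ((j : ℕ) : ℤ) ((l : ℕ) : ℤ) (k + u + 1) := by
  letI : LieRing A := LieRing.ofAssociativeRing
  set j' : ℤ := ((j : ℕ) : ℤ)
  set l' : ℤ := ((l : ℕ) : ℤ)
  have hΛDm : ∀ k' : ℕ, ⁅Lam1 H j' l', Dm Y H j' l' k'⁆ =
      (2 : ℂ) • Dm Y H j' l' (k' + 1) := by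
    intro k'
    rw [show Dm Y H j' l' (k' + 1) =
      (-((1 : ℂ) / 2)) • ⁅Dm Y H j' l' k', Lam1 H j' l'⁆ from rfl,
      smul_smul, ← lie_skew (Dm Y H j' l' k')]
    norm_num
  induction u generalizing k with
  | zero =>
    show ⁅X j', Dm Y H j' l' k⁆ = pG X Y H j' l' (k + 0 + 1)
    simp [pG]
  | succ u ih =>
    have key := leibniz_lie (Dp X H j' l' u) (Lam1 H j' l') (Dm Y H j' l' k)
    rw [hΛDm, lie_smul, ih (k + 1), ih k] at key
    have hmem : pG X Y H j' l' (k + u + 1) ∈ Submodule.span ℂ (Set.range H) := by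
      rw [pG]
      exact aux_lie_X_mem X Y H hXY j' _ (aux_Dm_mem Y H hHY j' l' _)
    have hzero : ⁅Lam1 H j' l', pG X Y H j' l' (k + u + 1)⁆ = 0 := by
      rw [← lie_skew, aux_lie_H_lam H hHH j' l' _ hmem, neg_zero]
    rw [hzero, add_zero] at key
    show ⁅((1 : ℂ) / 2) • ⁅Dp X H j' l' u, Lam1 H j' l'⁆, Dm Y H j' l' k⁆ = _
    rw [smul_lie, ← key, smul_smul]
    norm_num
    congr 1
    omega
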